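/- Unimodal evolution solutions: let Ω = (0, π) × (−ℓ, ℓ) with ℓ > 0, let k > 0, S > 0, P, α ∈ ℝ, let m be a positive integer, let ψ : ℝ → ℝ be four times continuously differentiable, set U(x, y) := ψ(y) sin(mx) and Q := ∫_Ω U_x². Suppose U satisfies the stationary equation Δ²U + (P − S·Q) U_xx = α U_y at every point of Ω, and φ : ℝ → ℝ is twice differentiable with φ″(t) + kφ′(t) + S m² Q (φ(t)³ − φ(t)) = 0 for all t ≥ 0. Then W(x, y, t) := φ(t) U(x, y) satisfies, for all t ≥ 0, the identity ∫_Ω W_x(·, ·, t)² = φ(t)² Q and, at every point of Ω, the evolution equation W_tt + k W_t + Δ²W + (P − S ∫_Ω W_x(·, ·, t)²) W_xx = α W_y. -/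

import Mathlib

open MeasureTheory

/-- The rectangular plate `Ω = (0, π) × (−ℓ, ℓ)`. -/
noncomputable def plateDomain (ℓ : ℝ) : Set (ℝ × ℝ) :=
  Set.Ioo 0 Real.pi ×ˢ Set.Ioo (-ℓ) ℓ

/-- The pointwise partial derivative in the first (`x`) variable. -/
noncomputable def pderivX (U : ℝ × ℝ → ℝ) : ℝ × ℝ → ℝ :=
  fun p => deriv (fun x => U (x, p.2)) p.1

/-- The pointwise partial derivative in the second (`y`) variable. -/
noncomputable def pderivY (U : ℝ × ℝ → ℝ) : ℝ × ℝ → ℝ :=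
  fun p => deriv (fun y => U (p.1, y)) p.2

/-- The biharmonic operator `Δ²U = U_xxxx + 2 U_xxyy + U_yyyy`, computed pointwise. -/
noncomputable def biharm (U : ℝ × ℝ → ℝ) : ℝ × ℝ → ℝ :=
  fun p => pderivX (pderivX (pderivX (pderivX U))) p
    + 2 * pderivY (pderivY (pderivX (pderivX U))) p
    + pderivY (pderivY (pderivY (pderivY U))) p

lemma pderivX_const_mul (c : ℝ) (V : ℝ × ℝ → ℝ) :
    pderivX (fun q => c * V q) = fun p => c * pderivX V p := by
  funext p
  simp only [pderivX]
  exact deriv_const_mul_field c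

lemma pderivY_const_mul (c : ℝ) (V : ℝ × ℝ → ℝ) :
    pderivY (fun q => c * V q) = fun p => c * pderivY V p := by
  funext p
  simp only [pderivY]
  exact deriv_const_mul_field c

lemma biharm_const_mul (c : ℝ) (V : ℝ × ℝ → ℝ) (p : ℝ × ℝ) :
    biharm (fun q => c * V q) p = c * biharm V p := by
  simp only [biharm, pderivX_const_mul, pderivY_const_mul]
  ring

lemma hasDerivAt_sin_mul (m x : ℝ) :
    HasDerivAt (fun x => Real.sin (m * x)) (m * Real.cos (m * x)) x := by
  simpa [mul_comm, Function.comp_def] using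
    (Real.hasDerivAt_sin (m * x)).comp x ((hasDerivAt_id x).const_mul m)

lemma hasDerivAt_cos_mul (m x : ℝ) :
    HasDerivAt (fun x => Real.cos (m * x)) (-(m * Real.sin (m * x))) x := by
  have := (Real.hasDerivAt_cos (m * x)).comp x ((hasDerivAt_id x).const_mul m)
  simpa [mul_comm, Function.comp_def] using this

lemma pderivXX_eq (ψ : ℝ → ℝ) (m : ℝ) (p : ℝ × ℝ) :
    pderivX (pderivX (fun p : ℝ × ℝ => ψ p.2 * Real.sin (m * p.1))) p
      = -(m ^ 2) * (ψ p.2 * Real.sin (m * p.1)) := by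
  have h1 : pderivX (fun p : ℝ × ℝ => ψ p.2 * Real.sin (m * p.1)) =
      fun p => ψ p.2 * (m * Real.cos (m * p.1)) := by
    funext q
    simp only [pderivX]
    exact ((hasDerivAt_sin_mul m q.1).const_mul (ψ q.2)).deriv
  rw [h1]
  simp only [pderivX]
  have h2 := (((hasDerivAt_cos_mul m p.1).const_mul m).const_mul (ψ p.2)).deriv
  rw [h2]
  ring

/-- Unimodal evolution solutions: if `U(x,y) = ψ(y) sin(mx)` (with `ψ` of class `C⁴`)
solves the stationary equation `Δ²U + (P − S Q) U_xx = α U_y` on `Ω`, where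
`Q = ∫_Ω U_x²`, and `φ` solves the damped Duffing equation
`φ″ + kφ′ + S m² Q (φ³ − φ) = 0` for `t ≥ 0`, then `W(x,y,t) = φ(t) U(x,y)` satisfies,
for all `t ≥ 0`, `∫_Ω W_x(·,·,t)² = φ(t)² Q` and, at every point of `Ω`, the evolution
equation `W_tt + k W_t + Δ²W + (P − S ∫_Ω W_x(·,·,t)²) W_xx = α W_y`. -/
theorem unimodal_evolution_solutions (ℓ k S P α : ℝ) (hℓ : 0 < ℓ) (hk : 0 < k)
    (hS : 0 < S) (m : ℕ) (hm : 0 < m) (ψ : ℝ → ℝ) (hψ : ContDiff ℝ 4 ψ)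
    (U : ℝ × ℝ → ℝ) (hU : U = fun p => ψ p.2 * Real.sin (m * p.1))
    (Q : ℝ) (hQdef : Q = ∫ p in plateDomain ℓ, (pderivX U p) ^ 2)
    (hstat : ∀ p ∈ plateDomain ℓ,
      biharm U p + (P - S * Q) * pderivX (pderivX U) p = α * pderivY U p)
    (φ : ℝ → ℝ) (hφ : Differentiable ℝ φ) (hφ' : Differentiable ℝ (deriv φ))
    (hduffing : ∀ t : ℝ, 0 ≤ t →
      deriv (deriv φ) t + k * deriv φ t
        + S * (m : ℝ) ^ 2 * Q * ((φ t) ^ 3 - φ t) = 0) :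
    ∀ t : ℝ, 0 ≤ t →
      ((∫ p in plateDomain ℓ, (pderivX (fun q => φ t * U q) p) ^ 2) = (φ t) ^ 2 * Q) ∧
      ∀ p ∈ plateDomain ℓ,
        deriv (deriv (fun s => φ s * U p)) t
          + k * deriv (fun s => φ s * U p) t
          + biharm (fun q => φ t * U q) p
          + (P - S * ∫ q in plateDomain ℓ, (pderivX (fun q' => φ t * U q') q) ^ 2)
              * pderivX (pderivX (fun q => φ t * U q)) p
          = α * pderivY (fun q => φ t * U q) p := by
  intro t ht
  have hQint : (∫ p in plateDomain ℓ, (pderivX (fun q => φ t * U q) p) ^ 2)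
      = (φ t) ^ 2 * Q := by
    rw [pderivX_const_mul]
    simp only [mul_pow]
    rw [integral_const_mul, hQdef]
  refine ⟨hQint, ?_⟩
  intro p hp
  have hstatp := hstat p hp
  have hduf := hduffing t ht
  have hxx : pderivX (pderivX U) p = -((m : ℝ) ^ 2) * U p := by
    rw [hU]; exact pderivXX_eq ψ m p
  have hd1 : deriv (fun s => φ s * U p) t = deriv φ t * U p :=
    deriv_mul_const (hφ t) (U p)
  have hd1' : deriv (fun s => φ s * U p) = fun s => deriv φ s * U p :=
    funext fun s => deriv_mul_const (hφ s) (U p)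
  have hd2 : deriv (deriv (fun s => φ s * U p)) t = deriv (deriv φ) t * U p := by
    rw [hd1']; exact deriv_mul_const (hφ' t) (U p)
  rw [hd1, hd2, hQint, biharm_const_mul, pderivX_const_mul, pderivX_const_mul,
    pderivY_const_mul]
  linear_combination (U p) * hduf + (φ t) * hstatp
    + S * Q * (φ t) * (1 - (φ t) ^ 2) * hxx
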